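/- Expanding the rational function (z₁-z₂)(z₁-z₃)(z₂-z₃) / ((2z₁-z₂)(z₁+z₂-z₃)(2z₁-z₃)) as a Laurent series in the domain |z₁| ≪ |z₂| ≪ |z₃| yields a series with nonnegative coefficients. -/

import Mathlib

open MvPowerSeries Finsupp

abbrev S := MvPowerSeries (Fin 2) ℝ

def NN (f : S) : Prop := ∀ d, 0 ≤ MvPowerSeries.coeff (R := ℝ) d f

lemma NN.mul {f g : S} (hf : NN f) (hg : NN g) : NN (f * g) := by
  intro d
  rw [MvPowerSeries.coeff_mul]
  exact Finset.sum_nonneg fun p _ => mul_nonneg (hf _) (hg _)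

lemma NN.add {f g : S} (hf : NN f) (hg : NN g) : NN (f + g) := fun d => by
  rw [map_add]; exact add_nonneg (hf d) (hg d)

lemma NN.one : NN (1 : S) := fun d => by
  rw [MvPowerSeries.coeff_one]; split <;> norm_num

lemma NN_inv {r : S} (hr0 : MvPowerSeries.constantCoeff (σ := Fin 2) (R := ℝ) r = 0)
    (hr : NN r) : NN (1 - r)⁻¹ := by
  have hc : MvPowerSeries.constantCoeff (σ := Fin 2) (R := ℝ) (1 - r) ≠ 0 := by
    simp [hr0]
  have key : (1 - r)⁻¹ = 1 + r * (1 - r)⁻¹ := by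
    have h := MvPowerSeries.mul_inv_cancel (k := ℝ) (1 - r) hc
    have : (1 - r) * (1 - r)⁻¹ = (1 - r)⁻¹ - r * (1 - r)⁻¹ := by ring
    rw [this] at h
    linear_combination h
  suffices H : ∀ n (d : Fin 2 →₀ ℕ), d.sum (fun _ n => n) = n →
      0 ≤ MvPowerSeries.coeff (R := ℝ) d (1 - r)⁻¹ by
    exact fun d => H _ d rfl
  intro n
  induction n using Nat.strong_induction_on with
  | _ n ih =>
  intro d hn
  rw [key, map_add, MvPowerSeries.coeff_mul]
  apply add_nonneg (NN.one d)
  apply Finset.sum_nonneg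
  intro p hp
  by_cases h1 : p.1 = 0
  · have : MvPowerSeries.coeff (R := ℝ) p.1 r = 0 := by
      rw [h1]; exact hr0
    simp [this]
  · apply mul_nonneg (hr _)
    rw [Finset.HasAntidiagonal.mem_antidiagonal] at hp
    have hsum : p.1.sum (fun _ n => n) + p.2.sum (fun _ n => n) = n := by
      rw [← hn, ← hp]
      exact (Finsupp.sum_add_index' (fun _ => rfl) (fun _ _ _ => rfl)).symm
    have hpos : 0 < p.1.sum (fun _ n => n) := by
      rcases Finsupp.ne_iff.mp h1 with ⟨i, hi⟩
      have hi' : p.1 i ≠ 0 := by simpa using hi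
      calc 0 < p.1 i := Nat.pos_of_ne_zero hi'
        _ ≤ p.1.sum (fun _ n => n) :=
          Finset.single_le_sum (f := fun j => p.1 j) (fun _ _ => Nat.zero_le _)
            (Finsupp.mem_support_iff.mpr hi')

    exact ih _ (by omega) _ rfl

lemma NN.X (i : Fin 2) : NN (MvPowerSeries.X i : S) := fun d => by
  rw [MvPowerSeries.coeff_X]; split <;> norm_num

lemma NN_frac {r s : S} (hr0 : MvPowerSeries.constantCoeff (σ := Fin 2) (R := ℝ) r = 0)
    (hs0 : MvPowerSeries.constantCoeff (σ := Fin 2) (R := ℝ) s = 0)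
    (hr : NN r) (hs : NN s) : NN ((1 - r) * (1 - (r + s))⁻¹) := by
  have hc : MvPowerSeries.constantCoeff (σ := Fin 2) (R := ℝ) (1 - (r + s)) ≠ 0 := by
    simp [hr0, hs0]
  have h := MvPowerSeries.mul_inv_cancel (k := ℝ) (1 - (r + s)) hc
  have key : (1 - r) * (1 - (r + s))⁻¹ = 1 + s * (1 - (r + s))⁻¹ := by
    linear_combination h
  rw [key]
  exact NN.add NN.one (NN.mul hs (NN_inv (by simp [hr0, hs0]) (NN.add hr hs)))

/-- With `a = z₁/z₂`, `b = z₂/z₃`, the rational function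
`(z₁-z₂)(z₁-z₃)(z₂-z₃)/((2z₁-z₂)(z₁+z₂-z₃)(2z₁-z₃))` equals
`(1-a)/(1-2a) · (1-ab)/(1-2ab) · (1-b)/(1-b-ab)`, and its expansion as a
formal power series in `a`, `b` (the expansion in the domain
`|z₁| ≪ |z₂| ≪ |z₃|`) has nonnegative coefficients. -/
theorem stmt_2 :
    ∀ d : Fin 2 →₀ ℕ,
      0 ≤ MvPowerSeries.coeff (R := ℝ) d
        (((1 - MvPowerSeries.X 0) * (1 - 2 * MvPowerSeries.X 0)⁻¹) *
          ((1 - MvPowerSeries.X 0 * MvPowerSeries.X 1) *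
            (1 - 2 * (MvPowerSeries.X 0 * MvPowerSeries.X 1))⁻¹) *
          ((1 - MvPowerSeries.X 1) *
            (1 - MvPowerSeries.X 1 - MvPowerSeries.X 0 * MvPowerSeries.X 1)⁻¹)) := by
  have e1 : (1 - 2 * MvPowerSeries.X 0 : S) = 1 - (MvPowerSeries.X 0 + MvPowerSeries.X 0) := by
    ring
  have e2 : (1 - 2 * (MvPowerSeries.X 0 * MvPowerSeries.X 1) : S) =
      1 - (MvPowerSeries.X 0 * MvPowerSeries.X 1 + MvPowerSeries.X 0 * MvPowerSeries.X 1) := by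
    ring
  have e3 : (1 - MvPowerSeries.X 1 - MvPowerSeries.X 0 * MvPowerSeries.X 1 : S) =
      1 - (MvPowerSeries.X 1 + MvPowerSeries.X 0 * MvPowerSeries.X 1) := by
    ring
  rw [e1, e2, e3]
  have h01 : MvPowerSeries.constantCoeff (σ := Fin 2) (R := ℝ)
      (MvPowerSeries.X 0 * MvPowerSeries.X 1) = 0 := by
    simp
  exact NN.mul (NN.mul
    (NN_frac (by simp) (by simp) (NN.X 0) (NN.X 0))
    (NN_frac h01 h01 (NN.mul (NN.X 0) (NN.X 1)) (NN.mul (NN.X 0) (NN.X 1))))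
    (NN_frac (by simp) h01 (NN.X 1) (NN.mul (NN.X 0) (NN.X 1)))
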